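/- Let (α_n)_{n≥0} be a sequence of nonnegative real numbers and define, for each peg k ∈ {0,1,2}, the sequence d_{n,k} by d_{0,k} = 0 and d_{n+1,k} = min{ d_{n,i} + d_{n,j} + α_n , 3·d_{n,k} + 2·α_n } where {i,j,k} = {0,1,2}. Then d_{n,0} = d_{n,1} = d_{n,2} for all n, the common value t_n satisfies t_0 = 0 and t_{n+1} = 2·t_n + α_n (i.e., the first branch always attains the minimum), and t_n = Σ_{ν=0}^{n−1} 2^{n−1−ν}·α_ν for all n ≥ 0. -/

import Mathlib

theorem stmt3 (α : ℕ → ℝ) (hα : ∀ n, 0 ≤ α n)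
    (d : ℕ → Fin 3 → ℝ)
    (h0 : ∀ k, d 0 k = 0)
    (hrec : ∀ (n : ℕ) (i j k : Fin 3), i ≠ j → i ≠ k → j ≠ k →
      d (n + 1) k = min (d n i + d n j + α n) (3 * d n k + 2 * α n)) :
    (∀ (n : ℕ) (k k' : Fin 3), d n k = d n k') ∧
    (∀ (n : ℕ) (k : Fin 3), d (n + 1) k = 2 * d n k + α n) ∧
    (∀ (n : ℕ) (k : Fin 3), d n k = ∑ ν ∈ Finset.range n, 2 ^ (n - 1 - ν) * α ν) := by
  have key : ∀ n, (∀ k k' : Fin 3, d n k = d n k') ∧ 0 ≤ d n 0 := by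
    intro n
    induction n with
    | zero => refine ⟨fun k k' => by rw [h0, h0], by rw [h0]⟩
    | succ n ih =>
      obtain ⟨heq, hpos⟩ := ih
      have hstep : ∀ k : Fin 3, d (n + 1) k = 2 * d n 0 + α n := by
        intro k
        obtain ⟨i, j, hij, hik, hjk⟩ : ∃ i j : Fin 3, i ≠ j ∧ i ≠ k ∧ j ≠ k := by
          fin_cases k
          · exact ⟨1, 2, by decide, by decide, by decide⟩
          · exact ⟨0, 2, by decide, by decide, by decide⟩
          · exact ⟨0, 1, by decide, by decide, by decide⟩
        rw [hrec n i j k hij hik hjk, heq i 0, heq j 0, heq k 0,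
          min_eq_left (by linarith [hα n])]
        ring
      exact ⟨fun k k' => by rw [hstep k, hstep k'],
        by rw [hstep 0]; linarith [hα n]⟩
  have heq : ∀ (n : ℕ) (k k' : Fin 3), d n k = d n k' := fun n => (key n).1
  have hrec2 : ∀ (n : ℕ) (k : Fin 3), d (n + 1) k = 2 * d n k + α n := by
    intro n k
    obtain ⟨i, j, hij, hik, hjk⟩ : ∃ i j : Fin 3, i ≠ j ∧ i ≠ k ∧ j ≠ k := by
      fin_cases k
      · exact ⟨1, 2, by decide, by decide, by decide⟩
      · exact ⟨0, 2, by decide, by decide, by decide⟩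
      · exact ⟨0, 1, by decide, by decide, by decide⟩
    have hpos : 0 ≤ d n k := (heq n k 0) ▸ (key n).2
    rw [hrec n i j k hij hik hjk, heq n i k, heq n j k,
      min_eq_left (by linarith [hα n])]
    ring
  refine ⟨heq, hrec2, ?_⟩
  intro n
  induction n with
  | zero => intro k; simp [h0]
  | succ n ih =>
    intro k
    rw [hrec2 n k, ih k, Finset.sum_range_succ]
    have h1 : n + 1 - 1 - n = 0 := by omega
    rw [h1, Finset.mul_sum, pow_zero, one_mul]
    congr 1
    apply Finset.sum_congr rfl
    intro ν hν
    have hν' : ν < n := Finset.mem_range.mp hν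
    have : n + 1 - 1 - ν = (n - 1 - ν) + 1 := by omega
    rw [this, pow_succ]
    ring
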